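/- Let D ⊆ ℝ^m be open and assume that for every z ∈ ∂D there exist a unit vector v ∈ ℝ^m and δ > 0 such that z + t·v ∉ D̄ for all t ∈ (0, δ] (this holds in particular when ∂D is of class C¹, v being the outward normal at z). Let K > 0 and let γ ∈ C([0,1],ℝ^m) satisfy γ(0) ∈ D, |γ(t) − γ(s)| ≤ K·√(t−s) for all 0 ≤ s ≤ t ≤ 1, and τ_D(γ) ≤ 1. Then for every ε > 0 there exists γ̃ ∈ C([0,1],ℝ^m) with γ̃(0) = γ(0), ‖γ − γ̃‖_∞ < ε, τ_D(γ̃) ≤ 1, and τ_D(γ̃) = τ_{D̄}(γ̃) (so that τ_D is continuous at γ̃); moreover, if γ is absolutely continuous with ∫₀¹ |γ'(t)|² dt < ∞, then γ̃ can be chosen absolutely continuous with ∫₀¹ |γ̃'(t)|² dt < ∞. -/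

import Mathlib

open MeasureTheory
open scoped ENNReal unitInterval

noncomputable section

/-- Exit time from `D` of a continuous path `γ : [0,1] → ℝ^m`:
`τ_D(γ) = inf { t ∈ [0,1] : γ(t) ∉ D }`, with the convention `inf ∅ = +∞`. -/
def exitTime {m : ℕ} (D : Set (EuclideanSpace ℝ (Fin m)))
    (γ : C(unitInterval, EuclideanSpace ℝ (Fin m))) : ℝ≥0∞ :=
  ⨅ (t : unitInterval) (_ : γ t ∉ D), ENNReal.ofReal t

/-- `γ` is absolutely continuous with a square-integrable derivative. -/
def HasL2Deriv {m : ℕ} (γ : C(unitInterval, EuclideanSpace ℝ (Fin m))) : Prop :=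
  ∃ g : ℝ → EuclideanSpace ℝ (Fin m), IntegrableOn g (Set.Icc (0:ℝ) 1) ∧
    (∫⁻ u in Set.Icc (0:ℝ) 1, ENNReal.ofReal (‖g u‖ ^ 2)) < ⊤ ∧
    ∀ t : unitInterval, γ t = γ 0 + ∫ u in (0:ℝ)..(t:ℝ), g u

namespace ExitTimeAux

/-- the ramp function `μ` -/
def pm (s η r : ℝ) : ℝ := max 0 (min ((r - s - η)/η) 1)

/-- the outward push size `ψ` -/
def pp (s η c r : ℝ) : ℝ := c * max 0 (min (r - s) η) * (1 - pm s η r)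

lemma pm_nonneg (s η r : ℝ) : 0 ≤ pm s η r := le_max_left _ _

lemma pm_le_one (s η r : ℝ) : pm s η r ≤ 1 :=
  max_le zero_le_one (min_le_right _ _)

lemma pm_of_le {s η r : ℝ} (hη : 0 < η) (h : r ≤ s + η) : pm s η r = 0 := by
  have : (r - s - η)/η ≤ 0 := div_nonpos_of_nonpos_of_nonneg (by linarith) hη.le
  have : min ((r - s - η)/η) 1 ≤ 0 := le_trans (min_le_left _ _) this
  simpa [pm] using max_eq_left this

lemma pm_of_ge {s η r : ℝ} (hη : 0 < η) (h : s + 2*η ≤ r) : pm s η r = 1 := by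
  have h1 : (1:ℝ) ≤ (r - s - η)/η := (le_div_iff₀ hη).2 (by linarith)
  simp [pm, min_eq_right h1]

lemma pm_eq {s η r : ℝ} (hη : 0 < η) (h1 : s + η ≤ r) (h2 : r ≤ s + 2*η) :
    pm s η r = (r - s - η)/η := by
  have ha : (r - s - η)/η ≤ 1 := (div_le_one hη).2 (by linarith)
  have hb : 0 ≤ (r - s - η)/η := div_nonneg (by linarith) hη.le
  simp [pm, min_eq_left ha, max_eq_right hb]

lemma pp_of_le {s η c r : ℝ} (hη : 0 < η) (h : r ≤ s) : pp s η c r = 0 := by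
  have : min (r - s) η = r - s := min_eq_left (by linarith)
  simp [pp, this, max_eq_left (by linarith : r - s ≤ 0)]

lemma pp_eq1 {s η c r : ℝ} (hη : 0 < η) (h1 : s ≤ r) (h2 : r ≤ s + η) :
    pp s η c r = c * (r - s) := by
  have h3 : min (r - s) η = r - s := min_eq_left (by linarith)
  rw [pp, h3, max_eq_right (by linarith : (0:ℝ) ≤ r - s), pm_of_le hη h2]
  ring

lemma pp_eq2 {s η c r : ℝ} (hη : 0 < η) (h1 : s + η ≤ r) :
    pp s η c r = c * η * (1 - pm s η r) := by
  have h3 : min (r - s) η = η := min_eq_right (by linarith)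
  rw [pp, h3, max_eq_right hη.le]

lemma pp_of_ge {s η c r : ℝ} (hη : 0 < η) (h : s + 2*η ≤ r) : pp s η c r = 0 := by
  rw [pp_eq2 hη (by linarith), pm_of_ge hη h]
  ring

lemma pm_continuous (s η : ℝ) : Continuous (pm s η) := by
  unfold pm; fun_prop

lemma pp_continuous (s η c : ℝ) : Continuous (pp s η c) := by
  unfold pp; exact (continuous_const.mul (by fun_prop)).mul
    (continuous_const.sub (pm_continuous s η))

variable {m : ℕ}

/-- `γ` extended to `ℝ` by clamping. -/
def clampMap (γ : C(unitInterval, EuclideanSpace ℝ (Fin m))) (r : ℝ) :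
    EuclideanSpace ℝ (Fin m) := γ (Set.projIcc 0 1 zero_le_one r)

lemma clampMap_continuous (γ : C(unitInterval, EuclideanSpace ℝ (Fin m))) :
    Continuous (clampMap γ) := γ.continuous.comp continuous_projIcc

lemma clampMap_of_mem (γ : C(unitInterval, EuclideanSpace ℝ (Fin m))) {r : ℝ}
    (hr : r ∈ Set.Icc (0:ℝ) 1) : clampMap γ r = γ ⟨r, hr⟩ := by
  rw [clampMap, Set.projIcc_of_mem]

lemma clampMap_coe (γ : C(unitInterval, EuclideanSpace ℝ (Fin m))) (t : unitInterval) :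
    clampMap γ (t : ℝ) = γ t := by
  rw [clampMap_of_mem γ t.2]

/-- The modified path. -/
def tweak (γ : C(unitInterval, EuclideanSpace ℝ (Fin m))) (t0 s η c : ℝ)
    (v : EuclideanSpace ℝ (Fin m)) : C(unitInterval, EuclideanSpace ℝ (Fin m)) where
  toFun t := (1 - pm s η t) • clampMap γ (min ((t:ℝ)/(1 - 3*η)) t0)
    + pm s η t • clampMap γ (max (t:ℝ) (s + 2*η)) + pp s η c t • v
  continuous_toFun := by
    have h1 : Continuous fun t : unitInterval => (t : ℝ) := continuous_subtype_val
    have hcl := clampMap_continuous γ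
    exact (((continuous_const.sub ((pm_continuous s η).comp h1)).smul
        (hcl.comp ((h1.div_const _).min continuous_const))).add
      (((pm_continuous s η).comp h1).smul (hcl.comp (h1.max continuous_const)))).add
      (((pp_continuous s η c).comp h1).smul continuous_const)

variable {γ : C(unitInterval, EuclideanSpace ℝ (Fin m))} {t0 s η c : ℝ}
  {v : EuclideanSpace ℝ (Fin m)}

lemma tweak_apply_A (hη : 0 < η) {t : unitInterval} (ht : (t:ℝ) ≤ s)
    (hb : (t:ℝ)/(1 - 3*η) ≤ t0) :
    tweak γ t0 s η c v t = clampMap γ ((t:ℝ)/(1 - 3*η)) := by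
  simp [tweak, pm_of_le hη (show (t:ℝ) ≤ s + η by linarith), pp_of_le hη ht, min_eq_left hb]

lemma tweak_apply_B (hη : 0 < η) {t : unitInterval} (ht1 : s ≤ (t:ℝ)) (ht2 : (t:ℝ) ≤ s + η)
    (hb : t0 ≤ (t:ℝ)/(1 - 3*η)) :
    tweak γ t0 s η c v t = clampMap γ t0 + (c * ((t:ℝ) - s)) • v := by
  simp [tweak, pm_of_le hη ht2, pp_eq1 hη ht1 ht2, min_eq_right hb]

lemma tweak_apply_C (hη : 0 < η) {t : unitInterval} (ht1 : s + η ≤ (t:ℝ)) (ht2 : (t:ℝ) ≤ s + 2*η)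
    (hb : t0 ≤ (t:ℝ)/(1 - 3*η)) :
    tweak γ t0 s η c v t = (1 - pm s η t) • (clampMap γ t0 + (c * η) • v)
      + pm s η t • clampMap γ (s + 2*η) := by
  rw [show tweak γ t0 s η c v t = (1 - pm s η t) • clampMap γ (min ((t:ℝ)/(1 - 3*η)) t0)
    + pm s η t • clampMap γ (max (t:ℝ) (s + 2*η)) + pp s η c t • v from rfl,
    min_eq_right hb, max_eq_right ht2, pp_eq2 hη ht1, smul_add]
  module

lemma tweak_apply_D (hη : 0 < η) {t : unitInterval} (ht : s + 2*η ≤ (t:ℝ)) :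
    tweak γ t0 s η c v t = γ t := by
  rw [show tweak γ t0 s η c v t = (1 - pm s η t) • clampMap γ (min ((t:ℝ)/(1 - 3*η)) t0)
    + pm s η t • clampMap γ (max (t:ℝ) (s + 2*η)) + pp s η c t • v from rfl,
    pm_of_ge hη ht, pp_of_ge hη ht, max_eq_left (by linarith), clampMap_coe]
  simp

end ExitTimeAux

set_option maxHeartbeats 1000000 in
open ExitTimeAux in
/-- Approximation of a Hölder path exiting `D` by a path at which the exit time functional
is continuous. The boundary condition holds in particular when `∂D` is of class `C¹`,
`v` being the outward normal. -/
theorem exists_approx_continuity_point_exitTime {m : ℕ}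
    (D : Set (EuclideanSpace ℝ (Fin m))) (hD : IsOpen D)
    (hbd : ∀ z ∈ frontier D, ∃ v : EuclideanSpace ℝ (Fin m), ‖v‖ = 1 ∧
      ∃ δ > (0:ℝ), ∀ t ∈ Set.Ioc (0:ℝ) δ, z + t • v ∉ closure D)
    (K : ℝ) (hK : 0 < K)
    (γ : C(unitInterval, EuclideanSpace ℝ (Fin m))) (hγ0 : γ 0 ∈ D)
    (hHolder : ∀ s t : unitInterval, s ≤ t →
      ‖γ t - γ s‖ ≤ K * Real.sqrt ((t : ℝ) - (s : ℝ)))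
    (hτ : exitTime D γ ≤ 1) (ε : ℝ) (hε : 0 < ε) :
    ∃ γ' : C(unitInterval, EuclideanSpace ℝ (Fin m)),
      γ' 0 = γ 0 ∧ dist γ γ' < ε ∧ exitTime D γ' ≤ 1 ∧
      exitTime D γ' = exitTime (closure D) γ' ∧ ContinuousAt (exitTime D) γ' ∧
      (HasL2Deriv γ → HasL2Deriv γ') := by
  classical
  obtain ⟨t1, ht1⟩ : ∃ t : unitInterval, γ t ∉ D := by
    by_contra h
    push_neg at h
    have he : exitTime D γ = ⊤ := by simp [exitTime, h]
    rw [he] at hτ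
    exact absurd hτ (by simp)
  set Γ : ℝ → EuclideanSpace ℝ (Fin m) := clampMap γ with hΓ
  have hΓcont : Continuous Γ := clampMap_continuous γ
  set S : Set ℝ := {r | r ∈ Set.Icc (0:ℝ) 1 ∧ Γ r ∉ D} with hS
  have hSne : S.Nonempty := ⟨t1, t1.2, by rw [hΓ, clampMap_coe]; exact ht1⟩
  have hSclosed : IsClosed S := by
    have : S = Set.Icc 0 1 ∩ Γ ⁻¹' Dᶜ := rfl
    rw [this]
    exact isClosed_Icc.inter (hD.isClosed_compl.preimage hΓcont)
  have hScompact : IsCompact S :=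
    isCompact_Icc.of_isClosed_subset hSclosed (fun r hr => hr.1)
  obtain ⟨t0, ht0S, ht0min⟩ := hScompact.exists_isLeast hSne
  have ht0mem : t0 ∈ Set.Icc (0:ℝ) 1 := ht0S.1
  have hΓ0 : Γ 0 = γ 0 := by
    rw [hΓ, clampMap_of_mem γ (Set.mem_Icc.mpr ⟨le_refl (0:ℝ), zero_le_one⟩)]
    congr 1
  have ht0pos : 0 < t0 := by
    rcases eq_or_lt_of_le ht0mem.1 with h | h
    · exfalso
      have := ht0S.2
      rw [← h, hΓ0] at this
      exact this hγ0
    · exact h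
  have hmem' : ∀ r : ℝ, r < t0 → Γ r ∈ D := by
    intro r hr
    rcases lt_or_ge r 0 with h0 | h0
    · have hΓr : Γ r = γ 0 := by
        rw [hΓ, clampMap, Set.projIcc_of_le_left _ h0.le]
        congr 1
      rw [hΓr]; exact hγ0
    · by_contra hc
      have : r ∈ S := ⟨⟨h0, le_trans hr.le ht0mem.2⟩, hc⟩
      exact absurd (ht0min this) (not_le.mpr hr)
  set z := Γ t0 with hz
  have hzD : z ∉ D := ht0S.2
  have hzfr : z ∈ frontier D := by
    rw [hD.frontier_eq]
    refine ⟨?_, hzD⟩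
    have htd : Filter.Tendsto Γ (nhdsWithin t0 (Set.Iio t0)) (nhds z) :=
      (hΓcont.tendsto t0).mono_left nhdsWithin_le_nhds
    exact mem_closure_of_tendsto htd
      (eventually_nhdsWithin_of_forall (fun r hr => hmem' r hr))
  obtain ⟨v, hv, δ, hδ, hray⟩ := hbd z hzfr
  set η : ℝ := min (1/6) (min (ε/4) (ε^2/(100*K^2))) with hηdef
  have hη : 0 < η := lt_min (by norm_num) (lt_min (by linarith) (by positivity))
  have hη6 : η ≤ 1/6 := min_le_left _ _
  have hηε4 : η ≤ ε/4 := le_trans (min_le_right _ _) (min_le_left _ _)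
  have hηε2 : η ≤ ε^2/(100*K^2) := le_trans (min_le_right _ _) (min_le_right _ _)
  have hb : (0:ℝ) < 1 - 3*η := by linarith
  have hb2 : (1:ℝ)/2 ≤ 1 - 3*η := by linarith
  set c := min 1 δ with hcdef
  have hc : 0 < c := lt_min one_pos hδ
  have hc1 : c ≤ 1 := min_le_left _ _
  have hcδ : c ≤ δ := min_le_right _ _
  set s := t0 * (1 - 3*η) with hsdef
  have hs0 : 0 < s := mul_pos ht0pos hb
  have hsE : s = t0 - 3*(t0*η) := by rw [hsdef]; ring
  have ht0η1 : t0*η ≤ η := mul_le_of_le_one_left hη.le ht0mem.2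
  have ht0η0 : 0 ≤ t0*η := mul_nonneg ht0mem.1 hη.le
  have hst0 : s ≤ t0 := by linarith
  have hs2η : s + 2*η ≤ 1 - η := by
    have hprod : (0:ℝ) ≤ (1-t0)*(1-3*η) := mul_nonneg (by linarith [ht0mem.2]) hb.le
    have hprodE : (1-t0)*(1-3*η) = 1 - 3*η - t0 + 3*(t0*η) := by ring
    linarith
  have hdivt0 : s / (1 - 3*η) = t0 := by
    field_simp
    rw [hsdef]; ring
  set γ' := tweak γ t0 s η c v with hγ'def
  -- Hölder bound for the clamped path
  have hHolΓ : ∀ p q : ℝ, p ∈ Set.Icc (0:ℝ) 1 → q ∈ Set.Icc (0:ℝ) 1 →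
      ‖Γ q - Γ p‖ ≤ K * Real.sqrt |q - p| := by
    intro p q hp hq
    rcases le_total p q with h | h
    · rw [abs_of_nonneg (by linarith)]
      rw [hΓ, clampMap_of_mem γ hp, clampMap_of_mem γ hq]
      exact hHolder ⟨p, hp⟩ ⟨q, hq⟩ h
    · rw [abs_of_nonpos (by linarith), norm_sub_rev]
      rw [hΓ, clampMap_of_mem γ hp, clampMap_of_mem γ hq]
      have := hHolder ⟨q, hq⟩ ⟨p, hp⟩ h
      simpa using this
  -- basic division facts
  have hdivle : ∀ r : ℝ, r ≤ s → r / (1 - 3*η) ≤ t0 := by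
    intro r hr
    rw [← hdivt0]
    gcongr
  have hdivlt : ∀ r : ℝ, r < s → r / (1 - 3*η) < t0 := by
    intro r hr
    rw [← hdivt0]
    exact div_lt_div_of_pos_right hr hb
  have hdivge : ∀ r : ℝ, s ≤ r → t0 ≤ r / (1 - 3*η) := by
    intro r hr
    rw [← hdivt0]
    gcongr
  -- path values
  have hA : ∀ t : unitInterval, (t:ℝ) ≤ s → γ' t = Γ ((t:ℝ)/(1 - 3*η)) :=
    fun t ht => tweak_apply_A hη ht (hdivle _ ht)
  have hinD : ∀ t : unitInterval, (t:ℝ) < s → γ' t ∈ D := by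
    intro t ht
    rw [hA t ht.le]
    exact hmem' _ (hdivlt _ ht)
  have hout : ∀ r : ℝ, s < r → r ≤ s + η → ∀ hr : r ∈ Set.Icc (0:ℝ) 1,
      γ' ⟨r, hr⟩ ∉ closure D := by
    intro r h1 h2 hr
    have hB := tweak_apply_B (γ := γ) (t0 := t0) (c := c) (v := v) hη
      (t := ⟨r, hr⟩) (le_of_lt h1) h2 (hdivge _ h1.le)
    rw [hγ'def, hB, ← hΓ, ← hz]
    refine hray _ ⟨mul_pos hc (by linarith), ?_⟩
    calc c * (r - s) ≤ c * 1 := by nlinarith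
      _ ≤ δ := by linarith
  -- the first point of γ' 
  have hγ'0 : γ' 0 = γ 0 := by
    have h0 : ((0:unitInterval):ℝ) = 0 := rfl
    rw [hA 0 (by rw [h0]; exact hs0.le), h0, zero_div, hΓ0]
  -- distance bound
  have hsq6 : K * Real.sqrt (6*η) ≤ ε/4 := by
    have hK2 : (0:ℝ) < K^2 := by positivity
    have h100 : 100*K^2*η ≤ ε^2 := by
      have := (le_div_iff₀ (by positivity : (0:ℝ) < 100*K^2)).mp hηε2
      linarith
    have h6 : 6*η ≤ (ε/(4*K))^2 := by
      rw [div_pow]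
      rw [le_div_iff₀ (by positivity : (0:ℝ) < (4*K)^2)]
      nlinarith [hη.le]
    have h1 : Real.sqrt (6*η) ≤ ε/(4*K) := by
      rw [show ε/(4*K) = Real.sqrt ((ε/(4*K))^2) from (Real.sqrt_sq (by positivity)).symm]
      exact Real.sqrt_le_sqrt h6
    calc K * Real.sqrt (6*η) ≤ K * (ε/(4*K)) :=
          mul_le_mul_of_nonneg_left h1 hK.le
      _ = ε/4 := by field_simp
  have hsqmono : ∀ x : ℝ, x ≤ 6*η → K * Real.sqrt x ≤ ε/4 :=
    fun x hx => le_trans (mul_le_mul_of_nonneg_left (Real.sqrt_le_sqrt hx) hK.le) hsq6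
  have hpt : ∀ t : unitInterval, dist (γ t) (γ' t) ≤ ε/2 := by
    intro t
    set r : ℝ := (t:ℝ) with hr
    have hr0 : 0 ≤ r := t.2.1
    have hr1 : r ≤ 1 := t.2.2
    have hγt : γ t = Γ r := (clampMap_coe γ t).symm
    rcases le_or_gt r s with hcase1 | hcase1
    · -- case A
      rw [hA t hcase1, hγt, dist_eq_norm]
      have hqmem : r/(1-3*η) ∈ Set.Icc (0:ℝ) 1 :=
        ⟨by positivity, le_trans (hdivle _ hcase1) ht0mem.2⟩
      have habs : |r/(1-3*η) - r| ≤ 6*η := by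
        have hle : r ≤ r/(1-3*η) := by
          rw [le_div_iff₀ hb]; nlinarith
        have : r/(1-3*η) ≤ t0 := hdivle _ hcase1
        rw [abs_of_nonneg (by linarith)]
        have heq : (r/(1-3*η)) * (1-3*η) = r := div_mul_cancel₀ _ hb.ne'
        nlinarith [ht0mem.2]
      calc ‖Γ r - Γ (r/(1-3*η))‖ = ‖Γ (r/(1-3*η)) - Γ r‖ := norm_sub_rev _ _
        _ ≤ K * Real.sqrt |r/(1-3*η) - r| := by
            have := hHolΓ r (r/(1-3*η)) ⟨hr0, hr1⟩ hqmem
            exact this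
        _ ≤ ε/4 := hsqmono _ habs
        _ ≤ ε/2 := by linarith
    · rcases le_or_gt r (s+η) with hcase2 | hcase2
      · -- case B
        have hB := tweak_apply_B (γ := γ) (t0 := t0) (c := c) (v := v) hη
          (t := t) hcase1.le hcase2 (hdivge _ hcase1.le)
        rw [hγ'def, hB, ← hΓ, hγt, dist_eq_norm]
        have h1 : ‖Γ r - (Γ t0 + (c*((t:ℝ)-s)) • v)‖
            ≤ ‖Γ r - Γ t0‖ + ‖(c*((t:ℝ)-s)) • v‖ := by
          rw [show Γ r - (Γ t0 + (c*((t:ℝ)-s)) • v)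
            = (Γ r - Γ t0) - (c*((t:ℝ)-s)) • v by module]
          exact norm_sub_le _ _
        have h2 : ‖Γ r - Γ t0‖ ≤ K * Real.sqrt |r - t0| := hHolΓ t0 r ht0mem ⟨hr0, hr1⟩
        have habs : |r - t0| ≤ 6*η := by
          have h1r : s < r := hcase1
          have h2r : r ≤ s + η := hcase2
          exact abs_le.mpr ⟨by linarith, by linarith⟩
        have hrs0 : (0:ℝ) ≤ (t:ℝ) - s := by linarith [hcase1.le, hr ▸ le_refl r]
        have h3 : ‖(c*((t:ℝ)-s)) • v‖ ≤ η := by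
          rw [norm_smul, hv, mul_one, Real.norm_eq_abs,
            abs_of_nonneg (mul_nonneg hc.le hrs0)]
          calc c*((t:ℝ)-s) ≤ 1*η := by
                refine mul_le_mul hc1 ?_ hrs0 zero_le_one
                have hle : r ≤ s + η := hcase2
                rw [hr] at hle
                linarith
            _ = η := one_mul η
        calc ‖Γ r - (Γ t0 + (c*((t:ℝ)-s)) • v)‖ ≤ K * Real.sqrt |r - t0| + η := by
              refine le_trans h1 ?_
              exact add_le_add h2 h3
          _ ≤ ε/4 + ε/4 := add_le_add (hsqmono _ habs) hηε4
          _ = ε/2 := by ring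
      · rcases le_or_gt r (s+2*η) with hcase3 | hcase3
        · -- case C
          have hC := tweak_apply_C (γ := γ) (t0 := t0) (c := c) (v := v) hη
            (t := t) hcase2.le hcase3 (hdivge _ (by linarith))
          rw [hγ'def, hC, ← hΓ, hγt, dist_eq_norm]
          set p : ℝ := pm s η (t:ℝ) with hpdef
          have hp0 : 0 ≤ p := pm_nonneg _ _ _
          have hp1 : p ≤ 1 := pm_le_one _ _ _
          have hsplit : Γ r - ((1-p) • (Γ t0 + (c*η) • v) + p • Γ (s+2*η))
              = (1-p) • (Γ r - (Γ t0 + (c*η) • v)) + p • (Γ r - Γ (s+2*η)) := by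
            module
          rw [hsplit]
          have habs : |r - t0| ≤ 6*η := by
            have h1r : s + η < r := hcase2
            have h2r : r ≤ s + 2*η := hcase3
            exact abs_le.mpr ⟨by linarith, by linarith⟩
          have hX : ‖Γ r - (Γ t0 + (c*η) • v)‖ ≤ ε/2 := by
            have hx1 : ‖Γ r - (Γ t0 + (c*η) • v)‖ ≤ ‖Γ r - Γ t0‖ + ‖(c*η) • v‖ := by
              rw [show Γ r - (Γ t0 + (c*η) • v)
                = (Γ r - Γ t0) - (c*η) • v by module]
              exact norm_sub_le _ _
            have hx2 : ‖(c*η) • v‖ ≤ η := by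
              rw [norm_smul, hv, mul_one, Real.norm_eq_abs,
                abs_of_nonneg (by positivity : (0:ℝ) ≤ c*η)]
              calc c*η ≤ 1*η := mul_le_mul_of_nonneg_right hc1 hη.le
                _ = η := one_mul η
            calc ‖Γ r - (Γ t0 + (c*η) • v)‖ ≤ K * Real.sqrt |r - t0| + η :=
                  le_trans hx1 (add_le_add (hHolΓ t0 r ht0mem ⟨hr0, hr1⟩) hx2)
              _ ≤ ε/4 + ε/4 := add_le_add (hsqmono _ habs) hηε4
              _ = ε/2 := by ring
          have hY : ‖Γ r - Γ (s+2*η)‖ ≤ ε/2 := by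
            have hmem2 : s+2*η ∈ Set.Icc (0:ℝ) 1 := ⟨by positivity, by linarith⟩
            have habs2 : |r - (s+2*η)| ≤ 6*η := by
              have h1r : s + η < r := hcase2
              have h2r : r ≤ s + 2*η := hcase3
              exact abs_le.mpr ⟨by linarith, by linarith⟩
            calc ‖Γ r - Γ (s+2*η)‖ ≤ K * Real.sqrt |r - (s+2*η)| :=
                  hHolΓ (s+2*η) r hmem2 ⟨hr0, hr1⟩
              _ ≤ ε/4 := hsqmono _ habs2
              _ ≤ ε/2 := by linarith
          calc ‖(1-p) • (Γ r - (Γ t0 + (c*η) • v)) + p • (Γ r - Γ (s+2*η))‖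
              ≤ (1-p) * ‖Γ r - (Γ t0 + (c*η) • v)‖ + p * ‖Γ r - Γ (s+2*η)‖ := by
                refine le_trans (norm_add_le _ _) ?_
                rw [norm_smul, norm_smul, Real.norm_eq_abs, Real.norm_eq_abs,
                  abs_of_nonneg (by linarith : (0:ℝ) ≤ 1-p), abs_of_nonneg hp0]
            _ ≤ (1-p) * (ε/2) + p * (ε/2) := by
                have h1p : (0:ℝ) ≤ 1 - p := by linarith
                exact add_le_add (mul_le_mul_of_nonneg_left hX h1p)
                  (mul_le_mul_of_nonneg_left hY hp0)
            _ = ε/2 := by ring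
        · -- case D
          have hDD := tweak_apply_D (γ := γ) (t0 := t0) (c := c) (v := v) hη
            (t := t) hcase3.le
          rw [hγ'def, hDD, dist_self]
          linarith
  have hdist : dist γ γ' < ε := by
    have := (ContinuousMap.dist_le (by positivity : (0:ℝ) ≤ ε/2)).mpr hpt
    linarith
  -- exit time identities
  have hdid : exitTime D γ' ≤ exitTime (closure D) γ' := by
    refine le_iInf₂ fun t ht => ?_
    exact iInf₂_le t (fun hm => ht (subset_closure hm))
  have hlow : ENNReal.ofReal s ≤ exitTime D γ' := by
    refine le_iInf₂ fun t ht => ?_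
    refine ENNReal.ofReal_le_ofReal ?_
    by_contra hlt
    push_neg at hlt
    exact ht (hinD t hlt)
  have hup : exitTime (closure D) γ' ≤ ENNReal.ofReal s := by
    refine ENNReal.le_of_forall_pos_le_add fun ε' hε' _ => ?_
    set ρ := min η (ε' : ℝ) with hρdef
    have hρpos : 0 < ρ := lt_min hη (by exact_mod_cast hε')
    have hρη : ρ ≤ η := min_le_left _ _
    have hmemIcc : s + ρ ∈ Set.Icc (0:ℝ) 1 := ⟨by positivity, by linarith⟩
    have hnotin : γ' ⟨s+ρ, hmemIcc⟩ ∉ closure D :=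
      hout _ (by linarith) (by linarith) hmemIcc
    calc exitTime (closure D) γ' ≤ ENNReal.ofReal (s+ρ) := iInf₂_le (⟨s+ρ, hmemIcc⟩ : unitInterval) hnotin
      _ = ENNReal.ofReal s + ENNReal.ofReal ρ := ENNReal.ofReal_add hs0.le hρpos.le
      _ ≤ ENNReal.ofReal s + (ε' : ℝ≥0∞) := by
          refine add_le_add_right ?_ _
          calc ENNReal.ofReal ρ ≤ ENNReal.ofReal (ε' : ℝ) :=
                ENNReal.ofReal_le_ofReal (min_le_right _ _)
            _ = (ε' : ℝ≥0∞) := ENNReal.ofReal_coe_nnreal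
  have heq1 : exitTime D γ' = ENNReal.ofReal s := le_antisymm (le_trans hdid hup) hlow
  have heq2 : exitTime (closure D) γ' = ENNReal.ofReal s :=
    le_antisymm hup (le_trans hlow hdid)
  have hτ' : exitTime D γ' ≤ 1 := by
    rw [heq1]
    exact ENNReal.ofReal_le_one.mpr (by linarith)
  -- continuity of the exit time at γ'
  have hcont : ContinuousAt (exitTime D) γ' := by
    rw [ContinuousAt, heq1]
    rw [ENNReal.tendsto_nhds ENNReal.ofReal_ne_top]
    intro ε' hε'
    set ρ := min η (min 1 ε').toReal with hρdef
    have hmt : (min 1 ε') ≠ ⊤ := ne_top_of_le_ne_top ENNReal.one_ne_top (min_le_left _ _)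
    have h1ε : (0:ℝ≥0∞) < min 1 ε' := lt_min zero_lt_one hε'
    have hρpos : 0 < ρ := lt_min hη (ENNReal.toReal_pos h1ε.ne' hmt)
    have hρη : ρ ≤ η := min_le_left _ _
    have hρε' : ENNReal.ofReal ρ ≤ ε' := by
      calc ENNReal.ofReal ρ ≤ ENNReal.ofReal ((min 1 ε').toReal) :=
            ENNReal.ofReal_le_ofReal (min_le_right _ _)
        _ = min 1 ε' := ENNReal.ofReal_toReal hmt
        _ ≤ ε' := min_le_right _ _
    have hmem1 : s + ρ ∈ Set.Icc (0:ℝ) 1 := ⟨by positivity, by linarith⟩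
    have hnot : γ' ⟨s+ρ, hmem1⟩ ∈ (closure D)ᶜ :=
      hout _ (by linarith) (by linarith) hmem1
    obtain ⟨r2, hr2, hball⟩ :=
      Metric.isOpen_iff.mp isClosed_closure.isOpen_compl _ hnot
    set A : Set unitInterval := {t | (t:ℝ) ≤ s - ρ} with hAdef
    have hAcl : IsClosed A := isClosed_le continuous_subtype_val continuous_const
    have himg : IsCompact (γ' '' A) := (hAcl.isCompact).image γ'.continuous
    have hsub : γ' '' A ⊆ D := by
      intro x hx
      obtain ⟨t, ht, rfl⟩ := hx
      exact hinD t (by have h' : (t:ℝ) ≤ s - ρ := ht; linarith)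
    obtain ⟨r1, hr1, hthick⟩ := himg.exists_thickening_subset_open hD hsub
    refine Filter.eventually_of_mem (Metric.ball_mem_nhds γ' (lt_min hr1 hr2)) ?_
    intro sig hσ
    rw [Metric.mem_ball] at hσ
    constructor
    · -- lower bound
      have hlowσ : ENNReal.ofReal (s - ρ) ≤ exitTime D sig := by
        refine le_iInf₂ fun t ht => ?_
        refine ENNReal.ofReal_le_ofReal ?_
        by_contra hlt
        push_neg at hlt
        refine ht ?_
        have hmemA : γ' t ∈ γ' '' A := ⟨t, le_of_lt hlt, rfl⟩
        have hd : dist (sig t) (γ' t) ≤ dist sig γ' := ContinuousMap.dist_apply_le_dist t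
        refine hthick (Metric.mem_thickening_iff.mpr ⟨γ' t, hmemA, ?_⟩)
        exact lt_of_le_of_lt hd (lt_of_lt_of_le hσ (min_le_left _ _))
      refine le_trans ?_ hlowσ
      rw [tsub_le_iff_right]
      calc ENNReal.ofReal s = ENNReal.ofReal ((s - ρ) + ρ) := by ring_nf
        _ ≤ ENNReal.ofReal (s - ρ) + ENNReal.ofReal ρ := ENNReal.ofReal_add_le
        _ ≤ ENNReal.ofReal (s - ρ) + ε' := add_le_add_right hρε' _
    · -- upper bound
      have hσnot : sig ⟨s+ρ, hmem1⟩ ∉ D := by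
        intro hmemD
        have hd : dist (sig ⟨s+ρ, hmem1⟩) (γ' ⟨s+ρ, hmem1⟩) ≤ dist sig γ' :=
          ContinuousMap.dist_apply_le_dist _
        have : sig ⟨s+ρ, hmem1⟩ ∈ (closure D)ᶜ := by
          refine hball ?_
          rw [Metric.mem_ball]
          exact lt_of_le_of_lt hd (lt_of_lt_of_le hσ (min_le_right _ _))
        exact this (subset_closure hmemD)
      calc exitTime D sig ≤ ENNReal.ofReal (s+ρ) := iInf₂_le (⟨s+ρ, hmem1⟩ : unitInterval) hσnot
        _ = ENNReal.ofReal s + ENNReal.ofReal ρ := ENNReal.ofReal_add hs0.le hρpos.le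
        _ ≤ ENNReal.ofReal s + ε' := add_le_add_right hρε' _
  refine ⟨γ', hγ'0, hdist, hτ', heq1.trans heq2.symm, hcont, ?_⟩
  intro hL2
  obtain ⟨g, hgInt, hgL2, hgFTC⟩ := hL2
  have hbne : (1 - 3*η) ≠ 0 := hb.ne'
  set w : EuclideanSpace ℝ (Fin m) := η⁻¹ • (Γ (s+2*η) - (Γ t0 + (c*η) • v)) with hwdef
  set g' : ℝ → EuclideanSpace ℝ (Fin m) := fun u =>
    if u < s then (1 - 3*η)⁻¹ • g (u/(1 - 3*η))
    else if u < s+η then c • v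
    else if u < s+2*η then w
    else g u with hg'def
  have hg'1 : ∀ u : ℝ, u < s → g' u = (1 - 3*η)⁻¹ • g (u/(1 - 3*η)) := by
    intro u hu; simp only [hg'def]; rw [if_pos hu]
  have hg'2 : ∀ u : ℝ, s ≤ u → u < s+η → g' u = c • v := by
    intro u hu1 hu2; simp only [hg'def]
    rw [if_neg (not_lt.mpr hu1), if_pos hu2]
  have hg'3 : ∀ u : ℝ, s+η ≤ u → u < s+2*η → g' u = w := by
    intro u hu1 hu2; simp only [hg'def]
    rw [if_neg (not_lt.mpr (by linarith)), if_neg (not_lt.mpr hu1), if_pos hu2]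
  have hg'4 : ∀ u : ℝ, s+2*η ≤ u → g' u = g u := by
    intro u hu; simp only [hg'def]
    rw [if_neg (not_lt.mpr (by linarith)), if_neg (not_lt.mpr (by linarith)),
      if_neg (not_lt.mpr hu)]
  have hane : ∀ x0 : ℝ, ∀ᵐ (u:ℝ), u ≠ x0 := by
    intro x0
    rw [MeasureTheory.ae_iff]
    simp only [ne_eq, not_not, Set.setOf_eq_eq_singleton]
    exact measure_singleton x0
  have hgII : ∀ a b : ℝ, 0 ≤ a → a ≤ 1 → 0 ≤ b → b ≤ 1 → IntervalIntegrable g volume a b := by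
    intro a b ha ha1 hb0 hb1
    rw [intervalIntegrable_iff]
    refine hgInt.mono_set ?_
    refine subset_trans Set.uIoc_subset_uIcc ?_
    exact Set.uIcc_subset_Icc ⟨ha, ha1⟩ ⟨hb0, hb1⟩
  -- integrability of g' on [0,s]
  have hscomp : IntervalIntegrable (fun u => g (u/(1 - 3*η))) volume 0 s := by
    have h := (hgII 0 t0 le_rfl zero_le_one ht0mem.1 ht0mem.2).comp_mul_left (c := (1 - 3*η)⁻¹)
    have e1 : (0:ℝ)/(1 - 3*η)⁻¹ = 0 := zero_div _
    have e2 : t0/(1 - 3*η)⁻¹ = s := by rw [div_inv_eq_mul, hsdef]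
    rw [e1, e2] at h
    have e3 : (fun u : ℝ => g (u/(1 - 3*η))) = fun x => g ((1 - 3*η)⁻¹ * x) := by
      funext u; rw [div_eq_inv_mul]
    rw [e3]
    exact h
  have hII0s : IntervalIntegrable g' volume 0 s := by
    have base := (hscomp.smul ((1 - 3*η)⁻¹))
    rw [intervalIntegrable_iff, Set.uIoc_of_le hs0.le] at base ⊢
    refine base.congr ?_
    filter_upwards [MeasureTheory.ae_restrict_mem measurableSet_Ioc,
      (hane s).filter_mono (MeasureTheory.ae_mono Measure.restrict_le_self)] with u hmem hu
    exact (hg'1 u (lt_of_le_of_ne hmem.2 hu)).symm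
  have hIIs1 : IntervalIntegrable g' volume s (s+η) := by
    have base : IntervalIntegrable (fun _ : ℝ => c • v) volume s (s+η) :=
      intervalIntegrable_const
    rw [intervalIntegrable_iff, Set.uIoc_of_le (by linarith : s ≤ s+η)] at base ⊢
    refine base.congr ?_
    filter_upwards [MeasureTheory.ae_restrict_mem measurableSet_Ioc,
      (hane (s+η)).filter_mono (MeasureTheory.ae_mono Measure.restrict_le_self)] with u hmem hu
    exact (hg'2 u hmem.1.le (lt_of_le_of_ne hmem.2 hu)).symm
  have hIIs2 : IntervalIntegrable g' volume (s+η) (s+2*η) := by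
    have base : IntervalIntegrable (fun _ : ℝ => w) volume (s+η) (s+2*η) :=
      intervalIntegrable_const
    rw [intervalIntegrable_iff, Set.uIoc_of_le (by linarith : s+η ≤ s+2*η)] at base ⊢
    refine base.congr ?_
    filter_upwards [MeasureTheory.ae_restrict_mem measurableSet_Ioc,
      (hane (s+2*η)).filter_mono (MeasureTheory.ae_mono Measure.restrict_le_self)] with u hmem hu
    exact (hg'3 u hmem.1.le (lt_of_le_of_ne hmem.2 hu)).symm
  have hIIs3 : IntervalIntegrable g' volume (s+2*η) 1 := by
    have base : IntervalIntegrable g volume (s+2*η) 1 :=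
      hgII (s+2*η) 1 (by linarith) (by linarith) zero_le_one le_rfl
    rw [intervalIntegrable_iff, Set.uIoc_of_le (by linarith : s+2*η ≤ 1)] at base ⊢
    refine base.congr ?_
    filter_upwards [MeasureTheory.ae_restrict_mem measurableSet_Ioc] with u hmem
    exact (hg'4 u hmem.1.le).symm
  have hg'01 : IntervalIntegrable g' volume 0 1 :=
    ((hII0s.trans hIIs1).trans hIIs2).trans hIIs3
  have hg'gen : ∀ a b : ℝ, 0 ≤ a → a ≤ b → b ≤ 1 → IntervalIntegrable g' volume a b := by
    intro a b ha hab hb1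
    rw [intervalIntegrable_iff, Set.uIoc_of_le hab]
    exact (hg'01.1).mono_set (fun u hu => ⟨lt_of_le_of_lt ha hu.1, le_trans hu.2 hb1⟩)
  refine ⟨g', ?_, ?_, ?_⟩
  · rw [integrableOn_Icc_iff_integrableOn_Ioc]
    exact hg'01.1
  · -- square integrability
    have hsplit : Set.Icc (0:ℝ) 1 ⊆ (Set.Ico 0 s ∪ Set.Ico s (s+η)) ∪
        (Set.Ico (s+η) (s+2*η) ∪ Set.Icc (s+2*η) 1) := by
      intro u hu
      rcases lt_or_ge u s with h1 | h1
      · exact Or.inl (Or.inl ⟨hu.1, h1⟩)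
      · rcases lt_or_ge u (s+η) with h2 | h2
        · exact Or.inl (Or.inr ⟨h1, h2⟩)
        · rcases lt_or_ge u (s+2*η) with h3 | h3
          · exact Or.inr (Or.inl ⟨h2, h3⟩)
          · exact Or.inr (Or.inr ⟨h3, hu.2⟩)
    have hP2 : ∫⁻ u in Set.Ico s (s+η), ENNReal.ofReal (‖g' u‖^2) < ⊤ := by
      have hcg : ∀ᵐ (u:ℝ), u ∈ Set.Ico s (s+η) →
          ENNReal.ofReal (‖g' u‖^2) = ENNReal.ofReal (‖c • v‖^2) :=
        Filter.Eventually.of_forall fun u hu => by rw [hg'2 u hu.1 hu.2]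
      rw [setLIntegral_congr_fun_ae measurableSet_Ico hcg, MeasureTheory.setLIntegral_const]
      exact ENNReal.mul_lt_top ENNReal.ofReal_lt_top measure_Ico_lt_top
    have hP3 : ∫⁻ u in Set.Ico (s+η) (s+2*η), ENNReal.ofReal (‖g' u‖^2) < ⊤ := by
      have hcg : ∀ᵐ (u:ℝ), u ∈ Set.Ico (s+η) (s+2*η) →
          ENNReal.ofReal (‖g' u‖^2) = ENNReal.ofReal (‖w‖^2) :=
        Filter.Eventually.of_forall fun u hu => by rw [hg'3 u hu.1 hu.2]
      rw [setLIntegral_congr_fun_ae measurableSet_Ico hcg, MeasureTheory.setLIntegral_const]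
      exact ENNReal.mul_lt_top ENNReal.ofReal_lt_top measure_Ico_lt_top
    have hP4 : ∫⁻ u in Set.Icc (s+2*η) 1, ENNReal.ofReal (‖g' u‖^2) < ⊤ := by
      have hcg : ∀ᵐ (u:ℝ), u ∈ Set.Icc (s+2*η) 1 →
          ENNReal.ofReal (‖g' u‖^2) = ENNReal.ofReal (‖g u‖^2) :=
        Filter.Eventually.of_forall fun u hu => by rw [hg'4 u hu.1]
      rw [setLIntegral_congr_fun_ae measurableSet_Icc hcg]
      refine lt_of_le_of_lt (lintegral_mono_set ?_) hgL2
      exact fun u hu => ⟨by linarith [hu.1], hu.2⟩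
    have hP1 : ∫⁻ u in Set.Ico 0 s, ENNReal.ofReal (‖g' u‖^2) < ⊤ := by
      set f : ℝ → ℝ≥0∞ := fun x => ENNReal.ofReal (((1 - 3*η)⁻¹)^2 * ‖g x‖^2) with hfdef
      have hnrm : AEMeasurable (fun x => ‖g x‖) (volume.restrict (Set.Icc (0:ℝ) 1)) :=
        hgInt.aestronglyMeasurable.norm.aemeasurable
      have hfmeas : AEMeasurable f (volume.restrict (Set.Icc (0:ℝ) 1)) := by
        have h1 : AEMeasurable (fun x => ((1 - 3*η)⁻¹)^2 * ‖g x‖^2)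
            (volume.restrict (Set.Icc (0:ℝ) 1)) := by
          have h2 : (fun x => ((1 - 3*η)⁻¹)^2 * ‖g x‖^2)
              = fun x => ((1 - 3*η)⁻¹)^2 * (‖g x‖ * ‖g x‖) := by
            funext x; rw [sq (‖g x‖)]
          rw [h2]
          exact (hnrm.mul hnrm).const_mul _
        exact ENNReal.measurable_ofReal.comp_aemeasurable h1
      have hTmeas : Measurable fun u : ℝ => (1 - 3*η)⁻¹ * u := by fun_prop
      have hpre : Set.Ico (0:ℝ) s = (fun u : ℝ => (1 - 3*η)⁻¹ * u) ⁻¹' (Set.Ico 0 t0) := by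
        ext u
        simp only [Set.mem_Ico, Set.mem_preimage]
        rw [← div_eq_inv_mul, div_lt_iff₀ hb, div_nonneg_iff]
        constructor
        · rintro ⟨h1, h2⟩
          exact ⟨Or.inl ⟨h1, hb.le⟩, by rw [hsdef] at h2; linarith⟩
        · rintro ⟨h1, h2⟩
          refine ⟨?_, by rw [hsdef]; linarith⟩
          rcases h1 with ⟨h1a, _⟩ | ⟨_, h1b⟩
          · exact h1a
          · linarith
      have hmapeq : Measure.map (fun u : ℝ => (1 - 3*η)⁻¹ * u) (volume.restrict (Set.Ico 0 s))
          = ENNReal.ofReal (1 - 3*η) • volume.restrict (Set.Ico 0 t0) := by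
        rw [hpre, ← Measure.restrict_map hTmeas measurableSet_Ico,
          Real.map_volume_mul_left (inv_ne_zero hbne), inv_inv,
          abs_of_pos hb, Measure.restrict_smul]
      have hfmap : AEMeasurable f
          (Measure.map (fun u : ℝ => (1 - 3*η)⁻¹ * u) (volume.restrict (Set.Ico 0 s))) := by
        rw [hmapeq]
        rw [aemeasurable_smul_measure_iff (by simp [ENNReal.ofReal_eq_zero]; linarith)]
        exact hfmeas.mono_measure (Measure.restrict_mono
          (Set.Ico_subset_Icc_self.trans (Set.Icc_subset_Icc_right ht0mem.2)) le_rfl)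
      calc ∫⁻ u in Set.Ico 0 s, ENNReal.ofReal (‖g' u‖^2)
          = ∫⁻ u in Set.Ico 0 s, f ((1 - 3*η)⁻¹ * u) := by
            refine setLIntegral_congr_fun_ae measurableSet_Ico
              (Filter.Eventually.of_forall fun u hu => ?_)
            rw [hg'1 u hu.2, hfdef]
            simp only
            rw [norm_smul, mul_pow, Real.norm_eq_abs, sq_abs, div_eq_inv_mul]
        _ = ∫⁻ x, f x ∂(Measure.map (fun u : ℝ => (1 - 3*η)⁻¹ * u)
              (volume.restrict (Set.Ico 0 s))) :=
            (lintegral_map' hfmap hTmeas.aemeasurable).symm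
        _ = ENNReal.ofReal (1 - 3*η) * ∫⁻ x in Set.Ico 0 t0, f x := by
            rw [hmapeq, lintegral_smul_measure, smul_eq_mul]
        _ < ⊤ := by
            have h1 : ∫⁻ x in Set.Ico 0 t0, f x ≤ ∫⁻ x in Set.Icc 0 1, f x :=
              lintegral_mono_set
                (Set.Ico_subset_Icc_self.trans (Set.Icc_subset_Icc_right ht0mem.2))
            have h2 : ∫⁻ x in Set.Icc (0:ℝ) 1, f x
                = ENNReal.ofReal (((1 - 3*η)⁻¹)^2) * ∫⁻ x in Set.Icc (0:ℝ) 1,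
                  ENNReal.ofReal (‖g x‖^2) := by
              rw [← lintegral_const_mul' _ _ ENNReal.ofReal_ne_top]
              refine lintegral_congr fun x => ?_
              rw [hfdef]
              exact ENNReal.ofReal_mul (by positivity)
            refine ENNReal.mul_lt_top ENNReal.ofReal_lt_top ?_
            refine lt_of_le_of_lt h1 ?_
            rw [h2]
            exact ENNReal.mul_lt_top ENNReal.ofReal_lt_top hgL2
    calc ∫⁻ u in Set.Icc (0:ℝ) 1, ENNReal.ofReal (‖g' u‖^2)
        ≤ ∫⁻ u in (Set.Ico 0 s ∪ Set.Ico s (s+η)) ∪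
            (Set.Ico (s+η) (s+2*η) ∪ Set.Icc (s+2*η) 1), ENNReal.ofReal (‖g' u‖^2) :=
          lintegral_mono_set hsplit
      _ ≤ (∫⁻ u in Set.Ico 0 s ∪ Set.Ico s (s+η), ENNReal.ofReal (‖g' u‖^2))
          + ∫⁻ u in Set.Ico (s+η) (s+2*η) ∪ Set.Icc (s+2*η) 1, ENNReal.ofReal (‖g' u‖^2) :=
          lintegral_union_le _ _ _
      _ ≤ ((∫⁻ u in Set.Ico 0 s, ENNReal.ofReal (‖g' u‖^2))
            + ∫⁻ u in Set.Ico s (s+η), ENNReal.ofReal (‖g' u‖^2))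
          + ((∫⁻ u in Set.Ico (s+η) (s+2*η), ENNReal.ofReal (‖g' u‖^2))
            + ∫⁻ u in Set.Icc (s+2*η) 1, ENNReal.ofReal (‖g' u‖^2)) :=
          add_le_add (lintegral_union_le _ _ _) (lintegral_union_le _ _ _)
      _ < ⊤ := by
          rw [ENNReal.add_lt_top, ENNReal.add_lt_top, ENNReal.add_lt_top]
          exact ⟨⟨hP1, hP2⟩, hP3, hP4⟩
  · -- FTC for g'
    have hgiv : ∀ r : ℝ, ∀ hr : r ∈ Set.Icc (0:ℝ) 1, Γ r = γ 0 + ∫ u in (0:ℝ)..r, g u := by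
      intro r hr
      rw [hΓ, clampMap_of_mem γ hr]
      exact hgFTC ⟨r, hr⟩
    have HA : ∀ r : ℝ, 0 ≤ r → r ≤ s →
        (∫ u in (0:ℝ)..r, g' u) = Γ (r/(1 - 3*η)) - γ 0 := by
      intro r h0 hrs
      have hcongr : ∫ u in (0:ℝ)..r, g' u
          = ∫ u in (0:ℝ)..r, (1 - 3*η)⁻¹ • g (u/(1 - 3*η)) := by
        refine intervalIntegral.integral_congr_ae ?_
        filter_upwards [hane s] with u hu hmem
        rw [Set.uIoc_of_le h0] at hmem
        exact hg'1 u (lt_of_le_of_ne (le_trans hmem.2 hrs) hu)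
      rw [hcongr, intervalIntegral.integral_smul, intervalIntegral.integral_comp_div g hbne,
        zero_div, smul_smul, inv_mul_cancel₀ hbne, one_smul]
      have hmem2 : r/(1 - 3*η) ∈ Set.Icc (0:ℝ) 1 :=
        ⟨by positivity, le_trans (hdivle _ hrs) ht0mem.2⟩
      rw [hgiv _ hmem2]
      abel
    have HB : ∀ r : ℝ, s ≤ r → r ≤ s+η → (∫ u in s..r, g' u) = (c*(r-s)) • v := by
      intro r h1 h2
      have hcongr : ∫ u in s..r, g' u = ∫ _ in s..r, c • v := by
        refine intervalIntegral.integral_congr_ae ?_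
        filter_upwards [hane (s+η)] with u hu hmem
        rw [Set.uIoc_of_le h1] at hmem
        exact hg'2 u hmem.1.le (lt_of_le_of_ne (le_trans hmem.2 h2) hu)
      rw [hcongr, intervalIntegral.integral_const, smul_smul, mul_comm]
    have HC : ∀ r : ℝ, s+η ≤ r → r ≤ s+2*η → (∫ u in (s+η)..r, g' u) = (r-(s+η)) • w := by
      intro r h1 h2
      have hcongr : ∫ u in (s+η)..r, g' u = ∫ _ in (s+η)..r, w := by
        refine intervalIntegral.integral_congr_ae ?_
        filter_upwards [hane (s+2*η)] with u hu hmem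
        rw [Set.uIoc_of_le h1] at hmem
        exact hg'3 u hmem.1.le (lt_of_le_of_ne (le_trans hmem.2 h2) hu)
      rw [hcongr, intervalIntegral.integral_const]
    have HD : ∀ r : ℝ, s+2*η ≤ r → r ≤ 1 →
        (∫ u in (s+2*η)..r, g' u) = Γ r - Γ (s+2*η) := by
      intro r h1 h2
      have hcongr : ∫ u in (s+2*η)..r, g' u = ∫ u in (s+2*η)..r, g u := by
        refine intervalIntegral.integral_congr fun u hu => ?_
        rw [Set.uIcc_of_le h1] at hu
        exact hg'4 u hu.1
      rw [hcongr, ← intervalIntegral.integral_interval_sub_left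
        (hgII 0 r le_rfl zero_le_one (by linarith) h2)
        (hgII 0 (s+2*η) le_rfl zero_le_one (by linarith) (by linarith))]
      rw [hgiv r ⟨by linarith, h2⟩, hgiv (s+2*η) ⟨by linarith, by linarith⟩]
      abel
    intro t
    rw [hγ'0]
    have ht1 : (t:ℝ) ≤ 1 := t.2.2
    have ht0' : 0 ≤ (t:ℝ) := t.2.1
    rcases le_or_gt (t:ℝ) s with h1 | h1
    · rw [hγ'def, tweak_apply_A hη h1 (hdivle _ h1), ← hΓ, HA _ ht0' h1]
      abel
    · rcases le_or_gt (t:ℝ) (s+η) with h2 | h2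
      · rw [hγ'def, tweak_apply_B hη h1.le h2 (hdivge _ h1.le), ← hΓ]
        rw [← intervalIntegral.integral_add_adjacent_intervals
          (hg'gen 0 s le_rfl hs0.le (by linarith))
          (hg'gen s (t:ℝ) hs0.le h1.le (by linarith)),
          HA s hs0.le le_rfl, hdivt0, HB _ h1.le h2]
        abel
      · rcases le_or_gt (t:ℝ) (s+2*η) with h3 | h3
        · rw [hγ'def, tweak_apply_C hη h2.le h3 (hdivge _ (by linarith)), ← hΓ,
            pm_eq hη h2.le h3]
          rw [← intervalIntegral.integral_add_adjacent_intervals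
            (hg'gen 0 (s+η) le_rfl (by linarith) (by linarith))
            (hg'gen (s+η) (t:ℝ) (by linarith) h2.le (by linarith)),
            ← intervalIntegral.integral_add_adjacent_intervals
            (hg'gen 0 s le_rfl hs0.le (by linarith))
            (hg'gen s (s+η) hs0.le (by linarith) (by linarith)),
            HA s hs0.le le_rfl, hdivt0, HB (s+η) (by linarith) le_rfl,
            HC _ h2.le h3, hwdef]
          have hcoef : ((t:ℝ) - (s+η)) • (η⁻¹ • (Γ (s+2*η) - (Γ t0 + (c*η) • v)))
              = (((t:ℝ) - s - η)/η) • (Γ (s+2*η) - (Γ t0 + (c*η) • v)) := by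
            rw [smul_smul]
            congr 1
            rw [div_eq_mul_inv]
            ring
          rw [hcoef]
          module
        · rw [hγ'def, tweak_apply_D hη h3.le, ← clampMap_coe γ t, ← hΓ]
          rw [← intervalIntegral.integral_add_adjacent_intervals
            (hg'gen 0 (s+2*η) le_rfl (by linarith) (by linarith))
            (hg'gen (s+2*η) (t:ℝ) (by linarith) h3.le ht1),
            ← intervalIntegral.integral_add_adjacent_intervals
            (hg'gen 0 (s+η) le_rfl (by linarith) (by linarith))
            (hg'gen (s+η) (s+2*η) (by linarith) (by linarith) (by linarith)),
            ← intervalIntegral.integral_add_adjacent_intervals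
            (hg'gen 0 s le_rfl hs0.le (by linarith))
            (hg'gen s (s+η) hs0.le (by linarith) (by linarith)),
            HA s hs0.le le_rfl, hdivt0, HB (s+η) (by linarith) le_rfl,
            HC (s+2*η) (by linarith) le_rfl, HD _ h3.le ht1, hwdef]
          have hcoef : ((s+2*η) - (s+η)) • (η⁻¹ • (Γ (s+2*η) - (Γ t0 + (c*η) • v)))
              = Γ (s+2*η) - (Γ t0 + (c*η) • v) := by
            rw [smul_smul, show (s+2*η) - (s+η) = η by ring, mul_inv_cancel₀ hη.ne',
              one_smul]
          rw [hcoef, show c*(s+η-s) = c*η by ring]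
          abel

end
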